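/- Let f : X → X be a pointwise periodic homeomorphism of a nontrivial compact metric space X (i.e. X has more than one point). Then the induced system (2^X, 2^f) is not topologically transitive. Consequently, (2^X, 2^f) is neither Devaney chaotic nor Auslander–Yorke chaotic. -/
import Mathlib


open TopologicalSpace Metric Set Filter

/-- The induced map on the hyperspace of nonempty compact (= closed) subsets. -/
noncomputable def hyper {X : Type*} [MetricSpace X] (f : X ≃ₜ X) :
    NonemptyCompacts X → NonemptyCompacts X :=
  fun A => ⟨⟨f '' A, A.isCompact.image f.continuous⟩, A.nonempty.image f⟩

/-- `x` is uniformly recurrent for `g`. -/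
def IsUnifRec {α : Type*} [MetricSpace α] (g : α → α) (x : α) : Prop :=
  ∀ ε > (0:ℝ), ∃ N > 0, ∀ k : ℕ, dist (g^[k * N] x) x < ε

/-- `x` is recurrent for `g` (it belongs to its own ω-limit set). -/
def IsRec {α : Type*} [MetricSpace α] (g : α → α) (x : α) : Prop :=
  ∀ ε > (0:ℝ), ∀ m : ℕ, ∃ n ≥ m, 0 < n ∧ dist (g^[n] x) x < ε

/-- `x` is almost periodic for `g`. -/
def IsAP {α : Type*} [MetricSpace α] (g : α → α) (x : α) : Prop :=
  ∀ ε > (0:ℝ), ∃ N : ℕ, ∀ n : ℕ, ∃ i < N, dist (g^[n + i] x) x < ε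

/-- `(x, y)` is an asymptotic pair for `g`. -/
def Asymp {α : Type*} [MetricSpace α] (g : α → α) (x y : α) : Prop :=
  Filter.Tendsto (fun n => dist (g^[n] x) (g^[n] y)) Filter.atTop (nhds 0)

/-- `(x, y)` is a proximal pair for `g`. -/
def Proximal {α : Type*} [MetricSpace α] (g : α → α) (x y : α) : Prop :=
  ∀ ε > (0:ℝ), ∀ m : ℕ, ∃ n ≥ m, dist (g^[n] x) (g^[n] y) < ε

/-- The ω-limit set of `x` under `g`. -/
def omegaSet {α : Type*} [MetricSpace α] (g : α → α) (x : α) : Set α :=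
  {y | ∀ ε > (0:ℝ), ∀ m : ℕ, ∃ n ≥ m, dist (g^[n] x) y < ε}

/-- `M` is a minimal set of `g`. -/
def IsMinimalFor {α : Type*} [TopologicalSpace α] (g : α → α) (M : Set α) : Prop :=
  M.Nonempty ∧ IsClosed M ∧ Set.MapsTo g M M ∧
    ∀ M' ⊆ M, M'.Nonempty → IsClosed M' → Set.MapsTo g M' M' → M' = M

/-- `A` is internally chain transitive for `g`. -/
def ICT {α : Type*} [MetricSpace α] (g : α → α) (A : Set α) : Prop :=
  ∀ a ∈ A, ∀ b ∈ A, ∀ ε > (0:ℝ), ∃ N : ℕ, 1 ≤ N ∧ ∃ c : ℕ → α,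
    c 0 = a ∧ c N = b ∧ (∀ i ≤ N, c i ∈ A) ∧ ∀ i < N, dist (g (c i)) (c (i + 1)) < ε

theorem stmt17 {X : Type*} [MetricSpace X] [CompactSpace X] [Nontrivial X]
    (f : X ≃ₜ X) (hper : ∀ x : X, ∃ n > 0, (⇑f)^[n] x = x) :
    ¬ (∀ U V : Set (NonemptyCompacts X), IsOpen U → IsOpen V →
        U.Nonempty → V.Nonempty →
        ∃ n : ℕ, ((hyper f)^[n] ⁻¹' U ∩ V).Nonempty) := by
  intro H
  obtain ⟨u, v, huv⟩ := exists_pair_ne X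
  set δ := dist u v with hδdef
  have hδ : 0 < δ := dist_pos.mpr huv
  -- Baire: some period set has interior
  have hcl : ∀ n : ℕ, IsClosed {x : X | (⇑f)^[n+1] x = x} := fun n =>
    isClosed_eq (f.continuous.iterate _) continuous_id
  have hun : ⋃ n : ℕ, {x : X | (⇑f)^[n+1] x = x} = univ := by
    ext x
    simp only [mem_iUnion, mem_univ, iff_true, mem_setOf_eq]
    obtain ⟨n, hn, hx⟩ := hper x
    exact ⟨n - 1, by rwa [Nat.sub_add_cancel hn]⟩
  obtain ⟨i, x₀, hx₀⟩ := nonempty_interior_of_iUnion_of_closed hcl hun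
  set N := i + 1 with hNdef
  have hN : 0 < N := Nat.succ_pos i
  obtain ⟨r, hr, hball⟩ := Metric.mem_nhds_iff.mp (mem_interior_iff_mem_nhds.mp hx₀)
  have hfix : ∀ x : X, dist x x₀ < r → (⇑f)^[N] x = x := fun x hx =>
    hball (Metric.mem_ball.mpr hx)
  -- uniform smallness of first N iterates near x₀
  have hcont : ∀ M : ℕ, ∃ ρ > (0:ℝ), ∀ s < M, ∀ x : X, dist x x₀ < ρ →
      dist ((⇑f)^[s] x) ((⇑f)^[s] x₀) < δ/8 := by
    intro M
    induction M with
    | zero => exact ⟨1, one_pos, fun s hs => absurd hs (Nat.not_lt_zero s)⟩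
    | succ M ih =>
      obtain ⟨ρ, hρ, hρ'⟩ := ih
      have hca : ContinuousAt ((⇑f)^[M]) x₀ := (f.continuous.iterate M).continuousAt
      obtain ⟨ρ₂, hρ₂, h₂⟩ := Metric.continuousAt_iff.mp hca (δ/8) (by linarith)
      refine ⟨min ρ ρ₂, lt_min hρ hρ₂, fun s hs x hx => ?_⟩
      rcases Nat.lt_succ_iff_lt_or_eq.mp hs with h | h
      · exact hρ' s h x (hx.trans_le (min_le_left _ _))
      · subst h; exact h₂ (hx.trans_le (min_le_right _ _))
  obtain ⟨ρ₀, hρ₀, hρ₀'⟩ := hcont N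
  set ρ := min ρ₀ r with hρdef
  have hρ : 0 < ρ := lt_min hρ₀ hr
  -- periodicity of iterates on the ball
  have hiterq : ∀ q s : ℕ, ∀ x : X, dist x x₀ < r →
      (⇑f)^[q * N + s] x = (⇑f)^[s] x := by
    intro q
    induction q with
    | zero => intro s x _; simp
    | succ q ih =>
      intro s x hx
      have : (q + 1) * N + s = (q * N + s) + N := by ring
      rw [this, Function.iterate_add_apply, hfix x hx]
      exact ih s x hx
  have hiter : ∀ n : ℕ, ∀ x : X, dist x x₀ < r →
      (⇑f)^[n] x = (⇑f)^[n % N] x := by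
    intro n x hx
    conv_lhs => rw [← Nat.div_add_mod n N]
    rw [Nat.mul_comm]
    exact hiterq (n / N) (n % N) x hx
  -- the hyperspace points
  have hXne : Nonempty X := ⟨u⟩
  set T : NonemptyCompacts X := ⟨⟨univ, isCompact_univ⟩, univ_nonempty⟩ with hT
  set S : NonemptyCompacts X := ⟨⟨{x₀}, isCompact_singleton⟩, singleton_nonempty _⟩ with hS
  obtain ⟨n, A, hAU, hAV⟩ := H (Metric.ball T (δ/4)) (Metric.ball S ρ)
    Metric.isOpen_ball Metric.isOpen_ball
    ⟨T, Metric.mem_ball_self (by linarith)⟩ ⟨S, Metric.mem_ball_self hρ⟩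
  -- coercion of hyper iterates
  have hcoe : ∀ m : ℕ, ∀ B : NonemptyCompacts X,
      (((hyper f)^[m] B : NonemptyCompacts X) : Set X) = (⇑f)^[m] '' (B : Set X) := by
    intro m
    induction m with
    | zero => intro B; simp
    | succ m ih =>
      intro B
      rw [Function.iterate_succ_apply']
      have hh : ((hyper f ((hyper f)^[m] B) : NonemptyCompacts X) : Set X)
          = f '' (((hyper f)^[m] B : NonemptyCompacts X) : Set X) := rfl
      rw [hh, ih, ← Set.image_comp, Function.iterate_succ']
  -- every point of A is ρ-close to x₀
  have hAsub : ∀ a ∈ (A : Set X), dist a x₀ < ρ := by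
    intro a ha
    have hfin : EMetric.hausdorffEdist (A : Set X) ({x₀} : Set X) ≠ ⊤ :=
      Metric.hausdorffEdist_ne_top_of_nonempty_of_bounded A.nonempty
        (singleton_nonempty _) A.isCompact.isBounded Bornology.isBounded_singleton
    have h1 : Metric.infDist a ({x₀} : Set X) ≤
        Metric.hausdorffDist (A : Set X) ({x₀} : Set X) :=
      Metric.infDist_le_hausdorffDist_of_mem ha hfin
    rw [Metric.infDist_singleton] at h1
    have h2 : dist A S < ρ := Metric.mem_ball.mp hAV
    rw [NonemptyCompacts.dist_eq] at h2
    exact lt_of_le_of_lt h1 h2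
  -- the image set is δ/4-dense
  have hdense : ∀ y : X, ∃ p ∈ (⇑f)^[n] '' (A : Set X), dist p y < δ/4 := by
    intro y
    have h2 : dist ((hyper f)^[n] A) T < δ/4 := Metric.mem_ball.mp hAU
    rw [NonemptyCompacts.dist_eq, hcoe] at h2
    have hfin : EMetric.hausdorffEdist ((⇑f)^[n] '' (A : Set X)) (T : Set X) ≠ ⊤ :=
      Metric.hausdorffEdist_ne_top_of_nonempty_of_bounded (A.nonempty.image _)
        univ_nonempty (A.isCompact.image (f.continuous.iterate n)).isBounded
        (isBounded_of_compactSpace)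
    exact Metric.exists_dist_lt_of_hausdorffDist_lt' (mem_univ y) h2 hfin
  obtain ⟨pu, hpuA, hpu⟩ := hdense u
  obtain ⟨pv, hpvA, hpv⟩ := hdense v
  obtain ⟨au, hau, haupu⟩ := hpuA
  obtain ⟨av, hav, havpv⟩ := hpvA
  have haur : dist au x₀ < r := lt_of_lt_of_le (hAsub au hau) (min_le_right _ _)
  have havr : dist av x₀ < r := lt_of_lt_of_le (hAsub av hav) (min_le_right _ _)
  have hsN : n % N < N := Nat.mod_lt n hN
  have hu8 : dist pu ((⇑f)^[n % N] x₀) < δ/8 := by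
    rw [← haupu, hiter n au haur]
    exact hρ₀' (n % N) hsN au (lt_of_lt_of_le (hAsub au hau) (min_le_left _ _))
  have hv8 : dist pv ((⇑f)^[n % N] x₀) < δ/8 := by
    rw [← havpv, hiter n av havr]
    exact hρ₀' (n % N) hsN av (lt_of_lt_of_le (hAsub av hav) (min_le_left _ _))
  have hchain : dist u v ≤ dist u pu + dist pu ((⇑f)^[n % N] x₀)
      + dist ((⇑f)^[n % N] x₀) pv + dist pv v := by
    calc dist u v ≤ dist u pv + dist pv v := dist_triangle _ _ _
      _ ≤ (dist u ((⇑f)^[n % N] x₀) + dist ((⇑f)^[n % N] x₀) pv) + dist pv v := by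
          gcongr; exact dist_triangle _ _ _
      _ ≤ (dist u pu + dist pu ((⇑f)^[n % N] x₀) + dist ((⇑f)^[n % N] x₀) pv) + dist pv v := by
          gcongr; exact dist_triangle _ _ _
      _ = _ := by ring
  linarith [hchain, hpu, hpv, hu8, hv8, dist_comm u pu, dist_comm v pv,
    dist_comm ((⇑f)^[n % N] x₀) pv]
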